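/- Let G be a group, let h, a, b ∈ G, and set c = h⁻¹ * a * h. If c commutes with b, then a * b * a⁻¹ * b⁻¹ = h * (c * h⁻¹ * c⁻¹) * (b * c * h * c⁻¹ * b⁻¹) * (b * h⁻¹ * b⁻¹). In particular, the commutator [a,b] is a product of four conjugates of h and h⁻¹. -/
import Mathlib

/-- Tsuboi's displacement trick (algebraic core): if `c = h⁻¹ a h` commutes with `b`,
then the commutator `[a,b]` has the given expression, and in particular is a product of
four conjugates of `h` and `h⁻¹`. -/
theorem stmt0 {G : Type*} [Group G] (h a b c : G) (hc : c = h⁻¹ * a * h)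
    (hcomm : Commute c b) :
    a * b * a⁻¹ * b⁻¹ =
      h * (c * h⁻¹ * c⁻¹) * (b * c * h * c⁻¹ * b⁻¹) * (b * h⁻¹ * b⁻¹) ∧
    ∃ (g₁ g₂ g₃ g₄ : G) (e₁ e₂ e₃ e₄ : Bool),
      a * b * a⁻¹ * b⁻¹ =
        (g₁ * (if e₁ then h else h⁻¹) * g₁⁻¹) * (g₂ * (if e₂ then h else h⁻¹) * g₂⁻¹) *
        (g₃ * (if e₃ then h else h⁻¹) * g₃⁻¹) * (g₄ * (if e₄ then h else h⁻¹) * g₄⁻¹) := by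
  have key : a * b * a⁻¹ * b⁻¹ =
      h * (c * h⁻¹ * c⁻¹) * (b * c * h * c⁻¹ * b⁻¹) * (b * h⁻¹ * b⁻¹) := by
    subst hc
    have hb : b * (h⁻¹ * a * h) = (h⁻¹ * a * h) * b := hcomm.symm
    calc a * b * a⁻¹ * b⁻¹
        = a * h⁻¹ * a⁻¹ * h * (h⁻¹ * a * h * b) * a⁻¹ * b⁻¹ := by group
      _ = a * h⁻¹ * a⁻¹ * h * (b * (h⁻¹ * a * h)) * a⁻¹ * b⁻¹ := by rw [hb]
      _ = _ := by group
  refine ⟨key, (1:G), c, b * c, b, true, false, true, false, ?_⟩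
  show a * b * a⁻¹ * b⁻¹ =
      ((1:G) * h * (1:G)⁻¹) * (c * h⁻¹ * c⁻¹) * ((b * c) * h * (b * c)⁻¹) * (b * h⁻¹ * b⁻¹)
  rw [key]; group
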